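/- Let v_1,…,v_n be additive valuations and let (A_1,…,A_n) be an EF1 allocation. Then there exists a permutation σ of {1,…,n} such that (A_{σ(1)},…,A_{σ(n)}) is EF1 and its envy graph — the directed graph on agents with an edge from i to j whenever v_i(A_{σ(i)}) < v_i(A_{σ(j)}) — is acyclic. -/

import Mathlib

open List in
lemma my_chain_concat {α : Type*} {r : α → α → Prop} :
    ∀ {a b : α} {l : List α}, List.Chain r a l →
      r (List.getLast (a :: l) (List.cons_ne_nil _ _)) b → List.Chain r a (l ++ [b])
  | a, b, [], _, h => by simpa [List.Chain] using h
  | a, b, c :: l, h, h' => by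
    rw [List.Chain, List.chain_cons] at h
    exact List.chain_cons.2 ⟨h.1, my_chain_concat h.2 (by simpa [List.getLast_cons_cons] using h')⟩

lemma exists_cycle_list {α : Type*} [DecidableEq α] {r : α → α → Prop} {i : α}
    (h : Relation.TransGen r i i) :
    ∃ L : List α, L ≠ [] ∧ L.Nodup ∧ ∀ x ∈ L, r x (L.formPerm x) := by
  classical
  obtain ⟨b, hib, hbi⟩ := Relation.TransGen.tail'_iff.1 h
  obtain ⟨l, hl, hlast⟩ := List.exists_isChain_cons_of_relationReflTransGen hib
  set m : List α := l ++ [i] with hm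
  have hchain : List.Chain' r (i :: m) := my_chain_concat hl (hlast ▸ hbi)
  set N : ℕ := m.length with hN
  have hN1 : 1 ≤ N := by simp [hN, hm]
  have hlen : (i :: m).length = N + 1 := by simp [hN]
  set g : ℕ → α := fun k => (i :: m).getD k i with hg
  have hgeq : ∀ k (hk : k ≤ N), g k = (i :: m).get ⟨k, by simp only [List.length_cons, ← hN]; omega⟩ := by
    intro k hk
    simp only [hg, List.get_eq_getElem]
    exact List.getD_eq_getElem _ _ (by simp only [List.length_cons, ← hN]; omega)
  have hstep : ∀ k < N, r (g k) (g (k + 1)) := by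
    rw [List.Chain', List.isChain_iff_getElem] at hchain
    intro k hk
    rw [hgeq k (by omega), hgeq (k+1) (by omega)]
    exact hchain k (by rw [hlen]; omega)
  have hNl : N = l.length + 1 := by simp [hN, hm]
  have hcyc : g 0 = g N := by
    have h0 : g 0 = i := by simp [hg]
    have h1 : g N = m.getD l.length i := by
      show (i :: m).getD N i = _
      rw [hNl, List.getD_cons_succ]
    have h2 : m.getD l.length i = i := by
      rw [hm, List.getD_append_right _ _ _ _ le_rfl]
      simp
    rw [h0, h1, h2]
  have hD : ∃ d, 0 < d ∧ ∃ s, s + d ≤ N ∧ g s = g (s + d) :=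
    ⟨N, by omega, 0, by omega, by simpa using hcyc⟩
  set d := Nat.find hD with hd
  obtain ⟨hd0, s, hsd, hgs⟩ := Nat.find_spec hD
  have hmin : ∀ d' < d, ¬(0 < d' ∧ ∃ s, s + d' ≤ N ∧ g s = g (s + d')) := fun d' h =>
    Nat.find_min hD h
  set L : List α := (List.range d).map (fun k => g (s + k)) with hL
  have hLlen : L.length = d := by simp [hL]
  have hLget : ∀ (a : ℕ) (ha : a < d), L[a]'(by omega) = g (s + a) := by
    intro a ha; simp [hL]
  have hnd : L.Nodup := by
    refine List.Nodup.map_on ?_ (List.nodup_range (n := d))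
    intro a ha b hb hab
    simp only [List.mem_range] at ha hb
    by_contra hne
    rcases Nat.lt_or_ge a b with hlt | hge
    · exact hmin (b - a) (by omega) ⟨by omega, s + a, by omega,
        by rw [show s + a + (b - a) = s + b by omega]; exact hab⟩
    · have : b < a := by omega
      exact hmin (a - b) (by omega) ⟨by omega, s + b, by omega,
        by rw [show s + b + (a - b) = s + a by omega]; exact hab.symm⟩
  refine ⟨L, by simp [hL]; omega, hnd, ?_⟩
  intro x hx
  obtain ⟨a, ha, rfl⟩ := List.mem_map.1 hx
  simp only [List.mem_range] at ha
  have haL : a < L.length := by omega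
  have hxg : g (s + a) = L.get ⟨a, haL⟩ := by
    simp [List.get_eq_getElem, hLget a ha]
  rw [hxg]
  have hx' : L.get ⟨a, haL⟩ ∈ L := hxg ▸ hx
  rw [List.formPerm_apply_mem_eq_next hnd _ hx']
  rw [show L.next (L.get ⟨a, haL⟩) hx' = L[(a + 1) % L.length]'(Nat.mod_lt _ (by omega)) from List.next_getElem L hnd a haL]
  simp only [List.get_eq_getElem]
  rw [hLget ((a+1) % L.length) (by rw [hLlen]; exact Nat.mod_lt _ (by omega))]
  rw [hLget a ha]
  rcases Nat.lt_or_ge (a + 1) d with hlt | hge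
  · rw [hLlen, Nat.mod_eq_of_lt hlt]
    exact hstep (s + a) (by omega)
  · have had : a + 1 = d := by omega
    rw [hLlen, had, Nat.mod_self]
    have h2 : r (g (s + a)) (g (s + a + 1)) := hstep (s + a) (by omega)
    rw [show s + a + 1 = s + d by omega, ← hgs] at h2
    simpa using h2

/-- envy-cycle elimination: any EF1 allocation for additive
valuations can be rearranged by a permutation of the bundles so that it
remains EF1 and the envy graph is acyclic. -/
theorem stmt_18 {γ : Type*} [DecidableEq γ] (n : ℕ)
    (w : Fin n → γ → ℝ) (hw : ∀ i g, 0 ≤ w i g)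
    (A : Fin n → Finset γ)
    (hEF1 : ∀ i j : Fin n, i ≠ j → A j = ∅ ∨
      ∃ g ∈ A j, ∑ x ∈ (A j).erase g, w i x ≤ ∑ x ∈ A i, w i x) :
    ∃ σ : Equiv.Perm (Fin n),
      (∀ i j : Fin n, i ≠ j → A (σ j) = ∅ ∨
        ∃ g ∈ A (σ j), ∑ x ∈ (A (σ j)).erase g, w i x ≤ ∑ x ∈ A (σ i), w i x)
      ∧ Irreflexive (Relation.TransGen
          (fun i j : Fin n =>
            ∑ x ∈ A (σ i), w i x < ∑ x ∈ A (σ j), w i x)) := by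
  classical
  set P : Equiv.Perm (Fin n) → Prop :=
    fun σ => ∀ i, ∑ x ∈ A i, w i x ≤ ∑ x ∈ A (σ i), w i x with hP
  have hne : (Finset.univ.filter P).Nonempty :=
    ⟨1, by simp [hP]⟩
  obtain ⟨σ, hσmem, hσmax⟩ := Finset.exists_max_image (Finset.univ.filter P)
    (fun σ => ∑ i, ∑ x ∈ A (σ i), w i x) hne
  have hσP : P σ := (Finset.mem_filter.1 hσmem).2
  refine ⟨σ, ?_, ?_⟩
  · intro i j hij
    by_cases hji : σ j = i
    · rw [hji]
      by_cases hAi : A i = ∅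
      · exact Or.inl hAi
      · obtain ⟨g, hg⟩ := Finset.nonempty_iff_ne_empty.2 hAi
        refine Or.inr ⟨g, hg, le_trans ?_ (hσP i)⟩
        exact Finset.sum_le_sum_of_subset_of_nonneg (Finset.erase_subset _ _)
          (fun x _ _ => hw i x)
    · rcases hEF1 i (σ j) (fun hh => hji hh.symm) with h0 | ⟨g, hg1, hg2⟩
      · exact Or.inl h0
      · exact Or.inr ⟨g, hg1, hg2.trans (hσP i)⟩
  · intro i hcontra
    obtain ⟨L, hL0, hLnd, hLr⟩ := exists_cycle_list hcontra
    set σ' := σ * L.formPerm with hσ'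
    have happ : ∀ x, σ' x = σ (L.formPerm x) := fun x => rfl
    have hle : ∀ x, ∑ g ∈ A (σ x), w x g ≤ ∑ g ∈ A (σ' x), w x g := by
      intro x
      by_cases hxL : x ∈ L
      · exact le_of_lt (hLr x hxL)
      · rw [happ, List.formPerm_apply_of_notMem hxL]
    have hP' : P σ' := fun x => (hσP x).trans (hle x)
    have hlt : (∑ i, ∑ x ∈ A (σ i), w i x) < ∑ i, ∑ x ∈ A (σ' i), w i x := by
      obtain ⟨x0, hx0⟩ := List.exists_mem_of_ne_nil L hL0
      exact Finset.sum_lt_sum (fun i _ => hle i)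
        ⟨x0, Finset.mem_univ _, hLr x0 hx0⟩
    exact absurd (hσmax σ' (Finset.mem_filter.2 ⟨Finset.mem_univ _, hP'⟩))
      (not_le.2 hlt)
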